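/- For every ℓ ≥ 2, the Lee monoid L_ℓ^1 satisfies Property (C_ℓ): if L_ℓ^1 satisfies an identity u ≈ v where u is a word over the two-letter alphabet {x,y} containing both x and y and the height of u (the number of maximal blocks of a single letter, i.e. islands) is at most ℓ, then v has the same type as u. -/

import Mathlib

/-- Two words have the same type. -/
def SameType {α : Type*} (u v : List α) : Prop :=
  ∃ L : List (α × ℕ × ℕ),
    (∀ p ∈ L, 0 < p.2.1 ∧ 0 < p.2.2) ∧
    List.Chain' (fun p q => p.1 ≠ q.1) L ∧
    u = L.flatMap (fun p => List.replicate p.2.1 p.1) ∧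
    v = L.flatMap (fun p => List.replicate p.2.2 p.1)

/-- The height of a word: the number of islands (maximal one-letter power factors). -/
def height {α : Type*} [DecidableEq α] (u : List α) : ℕ :=
  (u.destutter (· ≠ ·)).length

/-- The alternating word abab⋯ of length ℓ (a = 0, b = 1 in `Fin 3`). -/
def altWord (ℓ : ℕ) : FreeMonoid (Fin 3) :=
  FreeMonoid.ofList ((List.range ℓ).map (fun i => if i % 2 = 0 then (0 : Fin 3) else 1))

/-- Defining relations of the Lee monoid L_ℓ^1: generators a = 0, b = 1, zero = 2,
relations aa = a, bb = b, abab⋯ (length ℓ) = 0, and 0 is absorbing. -/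
def leeRel (ℓ : ℕ) : FreeMonoid (Fin 3) → FreeMonoid (Fin 3) → Prop := fun u v =>
  (u = .of 0 * .of 0 ∧ v = .of 0) ∨
  (u = .of 1 * .of 1 ∧ v = .of 1) ∨
  (u = altWord ℓ ∧ v = .of 2) ∨
  (u = .of 2 * .of 0 ∧ v = .of 2) ∨
  (u = .of 0 * .of 2 ∧ v = .of 2) ∨
  (u = .of 2 * .of 1 ∧ v = .of 2) ∨
  (u = .of 1 * .of 2 ∧ v = .of 2) ∨
  (u = .of 2 * .of 2 ∧ v = .of 2)

/-- The Lee monoid L_ℓ^1 (with adjoined identity 1, the empty word). -/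
def Lee (ℓ : ℕ) : Type := (conGen (leeRel ℓ)).Quotient

instance (ℓ : ℕ) : Monoid (Lee ℓ) := Con.monoid _

/-- A monoid satisfies the identity u ≈ v (words in countably many variables). -/
def SatM (M : Type*) [Monoid M] (u v : List ℕ) : Prop :=
  ∀ θ : ℕ → M, (u.map θ).prod = (v.map θ).prod

namespace LeeAux

abbrev X := Option (List Bool)

def lam (ℓ : ℕ) (c : Bool) : X → X
  | none => none
  | some l =>
    if l.head? = some c then some l
    else if ℓ ≤ l.length ∨ (l.length + 1 = ℓ ∧ c = true) then none
    else some (c :: l)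

lemma lam_some (ℓ : ℕ) (c : Bool) (l : List Bool) :
    lam ℓ c (some l) =
      if l.head? = some c then some l
      else if ℓ ≤ l.length ∨ (l.length + 1 = ℓ ∧ c = true) then none
      else some (c :: l) := rfl


@[simp] lemma lam_none (ℓ : ℕ) (c : Bool) : lam ℓ c none = none := rfl

lemma lam_out (ℓ : ℕ) (c : Bool) (x : X) :
    lam ℓ c x = none ∨ ∃ l, lam ℓ c x = some l ∧ l.head? = some c := by
  cases x with
  | none => exact Or.inl rfl
  | some l =>
    rw [lam_some]
    split_ifs with h1 h2
    · exact Or.inr ⟨l, rfl, h1⟩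
    · exact Or.inl rfl
    · exact Or.inr ⟨c :: l, rfl, rfl⟩

lemma lam_idem (ℓ : ℕ) (c : Bool) (x : X) : lam ℓ c (lam ℓ c x) = lam ℓ c x := by
  rcases lam_out ℓ c x with h | ⟨l, h, hl⟩ <;> rw [h]
  · rfl
  · rw [lam_some, if_pos hl]

/-- Processing a nonempty alternating word: result is dead, or a long list
with matching head; moreover if the word has length ≥ 2 the result respects the cap. -/
lemma foldr_lam_chain (ℓ : ℕ) :
    ∀ (s : List Bool) (x : X), s ≠ [] → s.Chain' (· ≠ ·) →
      s.foldr (lam ℓ) x = none ∨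
        ∃ l, s.foldr (lam ℓ) x = some l ∧ l.head? = s.head? ∧ s.length ≤ l.length ∧
          (2 ≤ s.length → (l.length < ℓ ∨ (l.length = ℓ ∧ l.head? = some false))) := by
  intro s
  induction s with
  | nil => intro x h; exact absurd rfl h
  | cons c s ih =>
    intro x _ hch
    cases s with
    | nil =>
      cases x with
      | none => exact Or.inl rfl
      | some l =>
        simp only [List.foldr_cons, List.foldr_nil]
        rw [lam_some]
        split_ifs with h1 h2
        · refine Or.inr ⟨l, rfl, h1, ?_, by simp⟩
          cases l with
          | nil => simp at h1
          | cons a t => simp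
        · exact Or.inl rfl
        · exact Or.inr ⟨c :: l, rfl, rfl, by simp, by simp⟩
    | cons d s' =>
      have hcd : c ≠ d := (List.isChain_cons_cons.1 hch).1
      have hch' : (d :: s').Chain' (· ≠ ·) := (List.isChain_cons_cons.1 hch).2
      rcases ih x (by simp) hch' with h | ⟨l, h, hhead, hlen, hcap⟩
      · exact Or.inl (by simp only [List.foldr_cons, h, lam])
      · simp only [List.foldr_cons, h]
        have hne : l.head? ≠ some c := by
          rw [hhead]; simp; exact fun e => hcd e.symm
        rw [lam_some, if_neg hne]
        split_ifs with h2
        · exact Or.inl rfl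
        · push_neg at h2
          refine Or.inr ⟨c :: l, rfl, rfl, by simpa using hlen, fun _ => ?_⟩
          rcases lt_or_ge (l.length + 1) ℓ with h3 | h3
          · exact Or.inl (by simpa using h3)
          · have h4 : l.length + 1 = ℓ := le_antisymm (by omega) h3
            have h5 : c = false := by
              have := h2.2 h4
              simpa using this
            exact Or.inr ⟨by simpa using h4, by simp [h5]⟩



def lamE (ℓ : ℕ) (c : Bool) : Function.End X := lam ℓ c

def gen (ℓ : ℕ) : Fin 3 → Function.End X := fun i =>
  if i = 0 then lam ℓ true else if i = 1 then lam ℓ false else fun _ => none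

def F (ℓ : ℕ) : FreeMonoid (Fin 3) →* Function.End X := FreeMonoid.lift (gen ℓ)

lemma prod_apply {α : Type*} (m : α → Function.End X) :
    ∀ (s : List α) (x : X), ((s.map m).prod) x = s.foldr (fun a r => m a r) x := by
  intro s
  induction s with
  | nil => intro x; rfl
  | cons a s ih =>
    intro x
    rw [List.map_cons, List.prod_cons, List.foldr_cons, ← ih x]
    rfl

def bpat (i : ℕ) : Bool := decide (i % 2 = 0)

lemma A_spec (ℓ : ℕ) (hℓ : 2 ≤ ℓ) :
    ∃ A : List Bool, A = (List.range ℓ).map bpat ∧ A.length = ℓ ∧ A.head? = some true ∧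
      A.Chain' (· ≠ ·) := by
  refine ⟨_, rfl, by simp, ?_, ?_⟩
  · obtain ⟨k, rfl⟩ : ∃ k, ℓ = k + 1 := ⟨ℓ - 1, by omega⟩
    rw [List.range_succ_eq_map]
    simp [bpat]
  · rw [List.Chain', List.isChain_map]
    obtain ⟨k, rfl⟩ : ∃ k, ℓ = k + 1 := ⟨ℓ - 1, by omega⟩
    rw [List.isChain_range_succ]
    intro m _
    simp only [bpat, ne_eq, decide_eq_decide]
    omega

lemma F_altWord (ℓ : ℕ) (hℓ : 2 ≤ ℓ) : F ℓ (altWord ℓ) = gen ℓ 2 := by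
  funext x
  obtain ⟨A, hA, hAlen, hAhead, hAch⟩ := A_spec ℓ hℓ
  have h1 : F ℓ (altWord ℓ) x = A.foldr (lam ℓ) x := by
    rw [F, altWord, FreeMonoid.lift_apply, FreeMonoid.toList_ofList, List.map_map, hA]
    rw [show (gen ℓ ∘ fun i => if i % 2 = 0 then (0 : Fin 3) else 1)
        = (lamE ℓ) ∘ bpat from ?_]
    · rw [← List.map_map]
      exact prod_apply _ _ x
    · funext i
      by_cases h : i % 2 = 0 <;> simp [gen, bpat, lamE, h] <;> rfl
  have hne : A ≠ [] := by rw [← List.length_pos_iff_ne_nil, hAlen]; omega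
  rcases foldr_lam_chain ℓ A x hne hAch with h | ⟨l, h, hh, hl, hcap⟩
  · rw [h1, h]; rfl
  · exfalso
    rcases hcap (by omega : 2 ≤ A.length) with h2 | ⟨h2, h3⟩
    · omega
    · rw [hh, hAhead] at h3; simp at h3

lemma hker (ℓ : ℕ) (hℓ : 2 ≤ ℓ) : conGen (leeRel ℓ) ≤ Con.ker (F ℓ) := by
  apply Con.conGen_le.2
  intro a b hab
  rw [Con.ker_rel]
  have e0 : F ℓ (.of 0) = lam ℓ true := by rw [F, FreeMonoid.lift_eval_of]; rfl
  have e1 : F ℓ (.of 1) = lam ℓ false := by rw [F, FreeMonoid.lift_eval_of]; rfl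
  have e2 : F ℓ (.of 2) = fun _ => none := by rw [F, FreeMonoid.lift_eval_of]; rfl
  rcases hab with ⟨rfl, rfl⟩|⟨rfl, rfl⟩|⟨rfl, rfl⟩|⟨rfl, rfl⟩|⟨rfl, rfl⟩|⟨rfl, rfl⟩|⟨rfl, rfl⟩|⟨rfl, rfl⟩
  · rw [map_mul, e0]; funext z; exact lam_idem ℓ true z
  · rw [map_mul, e1]; funext z; exact lam_idem ℓ false z
  · rw [F_altWord ℓ hℓ, e2]; rfl
  · rw [map_mul, e2, e0]; rfl
  · rw [map_mul, e2, e0]; funext z; exact lam_none ℓ true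
  · rw [map_mul, e2, e1]; rfl
  · rw [map_mul, e2, e1]; funext z; exact lam_none ℓ false
  · rw [map_mul, e2]; rfl

def phi (ℓ : ℕ) (hℓ : 2 ≤ ℓ) : Lee ℓ →* Function.End X :=
  Con.lift _ (F ℓ) (hker ℓ hℓ)

lemma flatMap_foldr (ℓ : ℕ) : ∀ (w : List ℕ) (g : ℕ → List Bool) (x : X),
    ((w.map (fun i => (((g i).map (lamE ℓ)).prod))).prod) x
      = (w.flatMap g).foldr (lam ℓ) x := by
  intro w
  induction w with
  | nil => intro g x; rfl
  | cons i w ih =>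
    intro g x
    rw [List.map_cons, List.prod_cons, List.flatMap_cons, List.foldr_append]
    rw [← ih g x]
    rw [show ∀ p q : Function.End X, (p * q) x = p (q x) from fun _ _ => rfl]
    exact prod_apply _ _ _

lemma bridge (ℓ : ℕ) (hℓ : 2 ≤ ℓ) (u v : List ℕ) (hsat : SatM (Lee ℓ) u v)
    (g : ℕ → List Bool) :
    (u.flatMap g).foldr (lam ℓ) (some []) = (v.flatMap g).foldr (lam ℓ) (some []) := by
  set θ : ℕ → Lee ℓ := fun i =>
    (conGen (leeRel ℓ)).mk'
      (FreeMonoid.ofList ((g i).map (fun b => if b then (0 : Fin 3) else 1))) with hθ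
  have h := congrArg (phi ℓ hℓ) (hsat θ)
  rw [map_list_prod, map_list_prod, List.map_map, List.map_map] at h
  have hphi : (phi ℓ hℓ) ∘ θ
      = fun i => (((g i).map (lamE ℓ)).prod) := by
    funext i
    show phi ℓ hℓ ((conGen (leeRel ℓ)).mk' _) = _
    rw [phi]
    erw [Con.lift_mk']
    rw [F, FreeMonoid.lift_apply, FreeMonoid.toList_ofList, List.map_map]
    congr 1
    apply List.map_congr_left
    intro b _
    cases b <;> simp [gen, lamE] <;> rfl
  rw [hphi] at h
  have h2 := congrArg (fun f : Function.End X => f (some [])) h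
  simpa only [flatMap_foldr] using h2

section Destutter
variable {α : Type*} [DecidableEq α]

lemma destutter'_head? (a : α) : ∀ (l : List α), (l.destutter' (· ≠ ·) a).head? = some a
  | [] => rfl
  | b :: l => by
    rw [List.destutter'_cons]
    split_ifs with h
    · rfl
    · exact destutter'_head? a l

lemma destutter_head? : ∀ (w : List α), (w.destutter (· ≠ ·)).head? = w.head?
  | [] => rfl
  | a :: l => by rw [List.destutter_cons', destutter'_head? a l]; rfl

lemma destutter_cons_eq (c : α) (w : List α) :
    (c :: w).destutter (· ≠ ·) =
      if w.head? = some c then w.destutter (· ≠ ·) else c :: w.destutter (· ≠ ·) := by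
  cases w with
  | nil => simp
  | cons b w' =>
    rw [List.destutter_cons_cons]
    by_cases h : b = c
    · subst h
      rw [if_neg (by simp), if_pos (by simp), List.destutter_cons']
    · rw [if_pos (fun e => h e.symm), if_neg (by simpa using fun e : b = c => h e),
        List.destutter_cons']

end Destutter

def bad (ℓ : ℕ) (w : List Bool) : Prop :=
  ℓ < (w.destutter (· ≠ ·)).length ∨
    ((w.destutter (· ≠ ·)).length = ℓ ∧ w.head? = some true)

lemma nf_eq (ℓ : ℕ) (hℓ : 2 ≤ ℓ) : ∀ (w : List Bool),
    (bad ℓ w → w.foldr (lam ℓ) (some []) = none) ∧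
    (¬ bad ℓ w → w.foldr (lam ℓ) (some []) = some (w.destutter (· ≠ ·))) := by
  intro w
  induction w with
  | nil =>
    constructor
    · intro hbad
      rcases hbad with h | ⟨h, h2⟩
      · simp [List.destutter_nil] at h
      · simp at h2
    · intro _; rfl
  | cons c w ih =>
    by_cases hb : bad ℓ w
    · have hr := ih.1 hb
      have hbad : bad ℓ (c :: w) := by
        rw [bad, destutter_cons_eq]
        by_cases hc : w.head? = some c
        · rw [if_pos hc]
          rcases hb with h | ⟨h, h2⟩
          · exact Or.inl h
          · refine Or.inr ⟨h, ?_⟩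
            rw [hc] at h2
            simpa using h2
        · rw [if_neg hc]
          refine Or.inl ?_
          simp only [List.length_cons]
          rcases hb with h | ⟨h, _⟩ <;> omega
      refine ⟨fun _ => ?_, fun h => absurd hbad h⟩
      rw [List.foldr_cons, hr, lam_none]
    · have hr := ih.2 hb
      rw [bad, not_or, not_lt, not_and] at hb
      obtain ⟨hb1, hb2⟩ := hb
      by_cases hc : w.head? = some c
      · have hD : (c :: w).destutter (· ≠ ·) = w.destutter (· ≠ ·) := by
          rw [destutter_cons_eq, if_pos hc]
        have hfold : (c :: w).foldr (lam ℓ) (some []) = some (w.destutter (· ≠ ·)) := by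
          rw [List.foldr_cons, hr, lam_some, if_pos (by rw [destutter_head?]; exact hc)]
        have hnb : ¬ bad ℓ (c :: w) := by
          rw [bad, hD]
          rintro (h | ⟨h, h2⟩)
          · omega
          · have : c = true := by simpa using h2
            exact hb2 h (by rwa [this] at hc)
        refine ⟨fun h => absurd h hnb, fun _ => by rw [hfold, hD]⟩
      · have hD : (c :: w).destutter (· ≠ ·) = c :: w.destutter (· ≠ ·) := by
          rw [destutter_cons_eq, if_neg hc]
        have hne : (w.destutter (· ≠ ·)).head? ≠ some c := by
          rw [destutter_head?]; exact hc
        by_cases h2 : ℓ ≤ (w.destutter (· ≠ ·)).length ∨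
            ((w.destutter (· ≠ ·)).length + 1 = ℓ ∧ c = true)
        · have hfold : (c :: w).foldr (lam ℓ) (some []) = none := by
            rw [List.foldr_cons, hr, lam_some, if_neg hne, if_pos h2]
          have hbad : bad ℓ (c :: w) := by
            rw [bad, hD]
            rcases h2 with h2 | ⟨h2, h3⟩
            · exact Or.inl (by simp only [List.length_cons]; omega)
            · exact Or.inr ⟨by simp only [List.length_cons]; omega, by simp [h3]⟩
          exact ⟨fun _ => hfold, fun h => absurd hbad h⟩
        · have hfold : (c :: w).foldr (lam ℓ) (some [])
              = some ((c :: w).destutter (· ≠ ·)) := by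
            rw [List.foldr_cons, hr, lam_some, if_neg hne, if_neg h2, hD]
          rw [not_or, not_le, not_and] at h2
          obtain ⟨h21, h22⟩ := h2
          have hnb : ¬ bad ℓ (c :: w) := by
            rw [bad, hD]
            rintro (h | ⟨h, h3⟩)
            · simp only [List.length_cons] at h; omega
            · simp only [List.length_cons] at h
              simp only [List.head?_cons, Option.some.injEq] at h3
              exact h22 h h3
          exact ⟨fun h => absurd h hnb, fun _ => hfold⟩

lemma destutter_map_two {x y : ℕ} (e : ℕ → Bool) (he : e x ≠ e y) :
    ∀ (w : List ℕ), (∀ z ∈ w, z = x ∨ z = y) →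
      (w.map e).destutter (· ≠ ·) = (w.destutter (· ≠ ·)).map e := by
  intro w
  induction w with
  | nil => intro _; rfl
  | cons c w ih =>
    intro hw
    have hc := hw c (List.mem_cons_self)
    have hw' : ∀ z ∈ w, z = x ∨ z = y := fun z hz => hw z (List.mem_cons_of_mem _ hz)
    rw [List.map_cons, destutter_cons_eq (e c) (w.map e), destutter_cons_eq c w]
    cases w with
    | nil => simp
    | cons b w' =>
      have hb := hw' b (List.mem_cons_self)
      have hiff : (b :: w').head? = some c ↔ ((b :: w').map e).head? = some (e c) := by
        simp only [List.head?_cons, List.map_cons, Option.some.injEq]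
        constructor
        · intro h; rw [h]
        · intro h
          rcases hb with rfl | rfl <;> rcases hc with rfl | rfl <;> simp_all
      by_cases h : (b :: w').head? = some c
      · rw [if_pos h, if_pos (hiff.1 h)]; exact ih hw'
      · rw [if_neg h, if_neg (fun hh => h (hiff.2 hh)), ih hw', List.map_cons]

lemma map_injOn_two {x y : ℕ} (e : ℕ → Bool) (he : e x ≠ e y) :
    ∀ (d₁ d₂ : List ℕ), (∀ z ∈ d₁, z = x ∨ z = y) → (∀ z ∈ d₂, z = x ∨ z = y) →
      d₁.map e = d₂.map e → d₁ = d₂ := by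
  intro d₁
  induction d₁ with
  | nil =>
    intro d₂ _ _ h
    cases d₂ with
    | nil => rfl
    | cons b d => simp at h
  | cons a d ih =>
    intro d₂ h1 h2 h
    cases d₂ with
    | nil => simp at h
    | cons b d' =>
      simp only [List.map_cons, List.cons.injEq] at h
      have hab : a = b := by
        have ha := h1 a (List.mem_cons_self)
        have hbb := h2 b (List.mem_cons_self)
        rcases ha with rfl | rfl <;> rcases hbb with rfl | rfl <;> simp_all
      rw [hab, ih d' (fun z hz => h1 z (List.mem_cons_of_mem _ hz))
        (fun z hz => h2 z (List.mem_cons_of_mem _ hz)) h.2]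

lemma destutter_replicate_append (a : ℕ) (w : List ℕ) (hw : w.head? ≠ some a) :
    ∀ m, 1 ≤ m →
      (List.replicate m a ++ w).destutter (· ≠ ·) = a :: w.destutter (· ≠ ·) := by
  intro m
  induction m with
  | zero => omega
  | succ n ihn =>
    intro _
    rw [List.replicate_succ, List.cons_append, destutter_cons_eq]
    cases n with
    | zero => rw [if_neg (by simpa using hw)]; rfl
    | succ k =>
      rw [if_pos (by rw [List.replicate_succ, List.cons_append]; rfl)]
      exact ihn (by omega)

lemma block_split : ∀ (u : List ℕ) (a : ℕ), u.head? = some a →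
    ∃ m u₁, 1 ≤ m ∧ u = List.replicate m a ++ u₁ ∧ u₁.head? ≠ some a ∧
      m + u₁.length = u.length := by
  intro u
  induction u with
  | nil => intro a h; simp at h
  | cons c u' ih =>
    intro a h
    have hc : c = a := by simpa using h
    subst hc
    by_cases h' : u'.head? = some c
    · obtain ⟨m, u₁, hm, hud, hu1, hlen⟩ := ih c h'
      exact ⟨m + 1, u₁, by omega, by rw [List.replicate_succ, List.cons_append, ← hud],
        hu1, by simp only [List.length_cons]; omega⟩
    · exact ⟨1, u', by omega, rfl, h', by simp only [List.length_cons, List.replicate_one]; omega⟩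

lemma sameType_of_destutter_eq :
    ∀ (n : ℕ) (u v : List ℕ), u.length ≤ n →
      u.destutter (· ≠ ·) = v.destutter (· ≠ ·) → SameType u v := by
  intro n
  induction n with
  | zero =>
    intro u v hlen hd
    have hu : u = [] := List.length_eq_zero_iff.1 (Nat.le_zero.1 hlen)
    subst hu
    have hv : v = [] := (List.destutter_eq_nil (· ≠ ·)).1 hd.symm
    subst hv
    exact ⟨[], by simp, List.isChain_nil, by simp, by simp⟩
  | succ n ih =>
    intro u v hlen hd
    cases u with
    | nil =>
      have hv : v = [] := (List.destutter_eq_nil (· ≠ ·)).1 hd.symm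
      subst hv
      exact ⟨[], by simp, List.isChain_nil, by simp, by simp⟩
    | cons c u' =>
      have hv : v.head? = some c := by
        rw [← destutter_head? v, ← hd, destutter_head?]; rfl
      obtain ⟨m, u₁, hm, hud, hu1, hulen⟩ := block_split (c :: u') c rfl
      obtain ⟨k, v₁, hk, hvd, hv1, hvlen⟩ := block_split v c hv
      have hDu : (c :: u').destutter (· ≠ ·) = c :: u₁.destutter (· ≠ ·) := by
        rw [hud]; exact destutter_replicate_append c u₁ hu1 m hm
      have hDv : v.destutter (· ≠ ·) = c :: v₁.destutter (· ≠ ·) := by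
        rw [hvd]; exact destutter_replicate_append c v₁ hv1 k hk
      have hd1 : u₁.destutter (· ≠ ·) = v₁.destutter (· ≠ ·) := by
        have := hd
        rw [hDu, hDv] at this
        exact (List.cons.injEq _ _ _ _ ▸ this).2
      have hlen1 : u₁.length ≤ n := by
        have : (c :: u').length ≤ n + 1 := hlen
        omega
      obtain ⟨L, hLpos, hLch, hLu, hLv⟩ := ih u₁ v₁ hlen1 hd1
      refine ⟨(c, m, k) :: L, ?_, ?_, ?_, ?_⟩
      · rintro p hp
        rcases List.mem_cons.1 hp with rfl | hp
        · exact ⟨hm, hk⟩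
        · exact hLpos p hp
      · rw [List.Chain', List.isChain_cons]
        refine ⟨?_, hLch⟩
        intro q hq hcq
        cases hL : L with
        | nil => rw [hL] at hq; simp at hq
        | cons q0 L' =>
          rw [hL] at hq
          simp only [List.head?_cons, Option.mem_def, Option.some.injEq] at hq
          have hq1 : 0 < q0.2.1 := (hLpos q0 (by rw [hL]; exact List.mem_cons_self)).1
          obtain ⟨t, ht⟩ : ∃ t, q0.2.1 = t + 1 := ⟨q0.2.1 - 1, by omega⟩
          have hh : u₁.head? = some q0.1 := by
            rw [hLu, hL, List.flatMap_cons, ht, List.replicate_succ, List.cons_append]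
            rfl
          have hcq' : c = q0.1 := by rw [← hq] at hcq; exact hcq
          apply hu1
          rw [hh]
          exact congrArg some hcq'.symm
      · show c :: u' = _
        rw [List.flatMap_cons, ← hLu]
        exact hud
      · rw [List.flatMap_cons, ← hLv]
        exact hvd

end LeeAux

/-- For every ℓ ≥ 2 the Lee monoid L_ℓ^1 satisfies Property (C_ℓ): if
L_ℓ^1 ⊨ u ≈ v where u is a word over the two-letter alphabet {x,y} containing both
letters and the height of u is at most ℓ, then v is of the same type as u. -/
theorem stmt2 (ℓ : ℕ) (hℓ : 2 ≤ ℓ) (x y : ℕ) (hxy : x ≠ y) (u v : List ℕ)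
    (hcon : ∀ z ∈ u, z = x ∨ z = y) (hx : x ∈ u) (hy : y ∈ u)
    (hh : height u ≤ ℓ)
    (hsat : SatM (Lee ℓ) u v) : SameType u v := by
  classical
  obtain ⟨c, hc⟩ : ∃ c, u.head? = some c := by
    cases u with
    | nil => simp at hx
    | cons a t => exact ⟨a, rfl⟩
  have hcmem : c = x ∨ c = y := hcon c (List.mem_of_mem_head? (by rw [hc]; rfl))
  -- Step 1 : every letter of v is x or y
  set g₁ : ℕ → List Bool := fun z => if z = x then [] else if z = y then [] else [true]
    with hg₁
  have hb1 := LeeAux.bridge ℓ hℓ u v hsat g₁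
  have hufl : u.flatMap g₁ = [] := by
    rw [List.flatMap_eq_nil_iff]
    intro z hz
    rcases hcon z hz with rfl | rfl <;> simp [hg₁]
  rw [hufl] at hb1
  have hvcon : ∀ z ∈ v, z = x ∨ z = y := by
    intro z hz
    by_contra hzc
    push_neg at hzc
    have htru : true ∈ v.flatMap g₁ :=
      List.mem_flatMap.2 ⟨z, hz, by simp [hg₁, hzc.1, hzc.2]⟩
    have hvne : v.flatMap g₁ ≠ [] := List.ne_nil_of_mem htru
    rcases Classical.em (LeeAux.bad ℓ (v.flatMap g₁)) with hB | hB
    · rw [(LeeAux.nf_eq ℓ hℓ _).1 hB] at hb1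
      simp at hb1
    · rw [(LeeAux.nf_eq ℓ hℓ _).2 hB] at hb1
      have : (v.flatMap g₁).destutter (· ≠ ·) = [] := by
        simpa using hb1.symm
      exact hvne ((List.destutter_eq_nil (· ≠ ·)).1 this)
  -- Step 2 : the main substitution
  set e : ℕ → Bool := fun z => !decide (z = c) with hge
  have hec : e c = false := by simp [hge]
  have he : e x ≠ e y := by
    rcases hcmem with rfl | rfl
    · simp [hge, hxy, Ne.symm hxy]
    · simp [hge, hxy, Ne.symm hxy]
  set g₃ : ℕ → List Bool := fun z => [e z] with hg₃
  have hb3 := LeeAux.bridge ℓ hℓ u v hsat g₃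
  have hfl : ∀ w : List ℕ, w.flatMap g₃ = w.map e := by
    intro w
    induction w with
    | nil => rfl
    | cons a t iht => rw [List.flatMap_cons, iht]; rfl
  rw [hfl, hfl] at hb3
  have hDu : (u.map e).destutter (· ≠ ·) = (u.destutter (· ≠ ·)).map e :=
    LeeAux.destutter_map_two e he u hcon
  have hDv : (v.map e).destutter (· ≠ ·) = (v.destutter (· ≠ ·)).map e :=
    LeeAux.destutter_map_two e he v hvcon
  have hnbu : ¬ LeeAux.bad ℓ (u.map e) := by
    rintro (h | ⟨_, h2⟩)
    · rw [hDu, List.length_map] at h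
      have hh' : (u.destutter (· ≠ ·)).length ≤ ℓ := hh
      omega
    · rw [List.head?_map, hc] at h2
      simp [hec] at h2
  rw [(LeeAux.nf_eq ℓ hℓ _).2 hnbu] at hb3
  have hnbv : ¬ LeeAux.bad ℓ (v.map e) := by
    intro hB
    rw [(LeeAux.nf_eq ℓ hℓ _).1 hB] at hb3
    simp at hb3
  rw [(LeeAux.nf_eq ℓ hℓ _).2 hnbv] at hb3
  have hmap : (u.destutter (· ≠ ·)).map e = (v.destutter (· ≠ ·)).map e := by
    rw [← hDu, ← hDv]
    simpa using hb3
  have hDuv : u.destutter (· ≠ ·) = v.destutter (· ≠ ·) := by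
    refine LeeAux.map_injOn_two e he _ _ ?_ ?_ hmap
    · exact fun z hz => hcon z ((u.destutter_sublist (· ≠ ·)).subset hz)
    · exact fun z hz => hvcon z ((v.destutter_sublist (· ≠ ·)).subset hz)
  exact LeeAux.sameType_of_destutter_eq u.length u v le_rfl hDuv
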